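/- Let A ∈ ℝ^{n×n} be K-monotone, let A = U − V be a K-regular splitting and U = F − G a K-weak regular splitting of type II with V F⁻¹ G = G F⁻¹ V, and let s ≥ 1 be an integer. Then I − T_s and I − T̂_s are invertible and (I − T̂_s)⁻¹ A = A (I − T_s)⁻¹; setting X = (I − T̂_s)⁻¹ A and Y = X − A, the splitting A = X − Y is a K-weak regular splitting of type II (X⁻¹ = F⁻¹ Σ_{j=0}^{s−1} (GF⁻¹)^j ≥_K 0 and Y X⁻¹ = T̂_s ≥_K 0), and it is the unique splitting induced by T̂_s: if A = X₁ − Y₁ with X₁ invertible and Y₁ X₁⁻¹ = T̂_s, then X₁ = X. -/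

import Mathlib

open Matrix Finset Filter Topology

/-- A proper cone in `ℝ^n`: a closed, pointed, solid convex cone. -/
def IsProperCone {n : ℕ} (K : Set (Fin n → ℝ)) : Prop :=
  IsClosed K ∧ Convex ℝ K ∧ (∀ c : ℝ, 0 ≤ c → ∀ x ∈ K, c • x ∈ K) ∧
    K ∩ (-K) = {0} ∧ (interior K).Nonempty

/-- `M ≥_K 0`: the matrix `M` leaves the cone `K` invariant. -/
def KNonneg {n : ℕ} (K : Set (Fin n → ℝ)) (M : Matrix (Fin n) (Fin n) ℝ) : Prop :=
  ∀ x ∈ K, M.mulVec x ∈ K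

/-- Spectral radius: the supremum of the moduli of the complex eigenvalues. -/
noncomputable def specRad {n : ℕ} (M : Matrix (Fin n) (Fin n) ℝ) : ℝ :=
  sSup ((fun z : ℂ => ‖z‖) '' spectrum ℂ (M.map Complex.ofReal))

/-- `A = U - V` is a `K`-regular splitting. -/
def KRegularSplitting {n : ℕ} (K : Set (Fin n → ℝ))
    (A U V : Matrix (Fin n) (Fin n) ℝ) : Prop :=
  A = U - V ∧ IsUnit U ∧ KNonneg K U⁻¹ ∧ KNonneg K V

/-- `A = U - V` is a `K`-weak regular splitting of type I. -/
def KWeakRegularSplittingI {n : ℕ} (K : Set (Fin n → ℝ))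
    (A U V : Matrix (Fin n) (Fin n) ℝ) : Prop :=
  A = U - V ∧ IsUnit U ∧ KNonneg K U⁻¹ ∧ KNonneg K (U⁻¹ * V)

/-- `A = U - V` is a `K`-weak regular splitting of type II. -/
def KWeakRegularSplittingII {n : ℕ} (K : Set (Fin n → ℝ))
    (A U V : Matrix (Fin n) (Fin n) ℝ) : Prop :=
  A = U - V ∧ IsUnit U ∧ KNonneg K U⁻¹ ∧ KNonneg K (V * U⁻¹)

/-- `A` is `K`-monotone: invertible with `A⁻¹ ≥_K 0`. -/
def KMonotone {n : ℕ} (K : Set (Fin n → ℝ)) (A : Matrix (Fin n) (Fin n) ℝ) : Prop :=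
  IsUnit A ∧ KNonneg K A⁻¹

/-- Two-stage iteration matrix `T_s = (F⁻¹G)^s + Σ_{j=0}^{s-1} (F⁻¹G)^j F⁻¹ V`. -/
noncomputable def twoStageT {n : ℕ} (F G V : Matrix (Fin n) (Fin n) ℝ) (s : ℕ) :
    Matrix (Fin n) (Fin n) ℝ :=
  (F⁻¹ * G) ^ s + (∑ j ∈ Finset.range s, (F⁻¹ * G) ^ j) * (F⁻¹ * V)

/-- `T̂_s = (GF⁻¹)^s + Σ_{j=0}^{s-1} (GF⁻¹)^j V F⁻¹`. -/
noncomputable def twoStageThat {n : ℕ} (F G V : Matrix (Fin n) (Fin n) ℝ) (s : ℕ) :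
    Matrix (Fin n) (Fin n) ℝ :=
  (G * F⁻¹) ^ s + (∑ j ∈ Finset.range s, (G * F⁻¹) ^ j) * (V * F⁻¹)

/-- `Q_s = Σ_{j=0}^{s-1} (F⁻¹G)^j F⁻¹`. -/
noncomputable def twoStageQ {n : ℕ} (F G : Matrix (Fin n) (Fin n) ℝ) (s : ℕ) :
    Matrix (Fin n) (Fin n) ℝ :=
  (∑ j ∈ Finset.range s, (F⁻¹ * G) ^ j) * F⁻¹

/-! ### Auxiliary lemmas -/

private lemma geom_one_sub {R : Type*} [Ring R] (x : R) (m : ℕ) :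
    (∑ j ∈ Finset.range m, x ^ j) * (1 - x) = 1 - x ^ m := by
  rw [← neg_sub x 1, mul_neg, geom_sum_mul, neg_sub]

private lemma one_sub_geom {R : Type*} [Ring R] (x : R) (m : ℕ) :
    (1 - x) * (∑ j ∈ Finset.range m, x ^ j) = 1 - x ^ m := by
  rw [← neg_sub x 1, neg_mul, mul_geom_sum, neg_sub]

section ConeLemmas

variable {n : ℕ} {K : Set (Fin n → ℝ)}

lemma cone_zero_mem (hK : IsProperCone K) : (0 : Fin n → ℝ) ∈ K := by
  have h0 : (0 : Fin n → ℝ) ∈ ({0} : Set (Fin n → ℝ)) := Set.mem_singleton _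
  rw [← hK.2.2.2.1] at h0
  exact h0.1

lemma cone_add (hK : IsProperCone K) {a b : Fin n → ℝ} (ha : a ∈ K) (hb : b ∈ K) :
    a + b ∈ K := by
  have h := hK.2.1 ha hb (by norm_num : (0:ℝ) ≤ 1/2) (by norm_num : (0:ℝ) ≤ 1/2)
    (by norm_num)
  have h2 := hK.2.2.1 2 (by norm_num) _ h
  have h3 : (2:ℝ) • ((1/2:ℝ) • a + (1/2:ℝ) • b) = a + b := by
    rw [smul_add, smul_smul, smul_smul]
    norm_num
  rwa [h3] at h2

lemma knn_mul {M N : Matrix (Fin n) (Fin n) ℝ} (hM : KNonneg K M) (hN : KNonneg K N) :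
    KNonneg K (M * N) := by
  intro x hx
  rw [← Matrix.mulVec_mulVec]
  exact hM _ (hN _ hx)

lemma knn_one : KNonneg K (1 : Matrix (Fin n) (Fin n) ℝ) := by
  intro x hx
  rwa [Matrix.one_mulVec]

lemma knn_zero (hK : IsProperCone K) : KNonneg K (0 : Matrix (Fin n) (Fin n) ℝ) := by
  intro x hx
  rw [Matrix.zero_mulVec]
  exact cone_zero_mem hK

lemma knn_add (hK : IsProperCone K) {M N : Matrix (Fin n) (Fin n) ℝ}
    (hM : KNonneg K M) (hN : KNonneg K N) : KNonneg K (M + N) := by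
  intro x hx
  rw [Matrix.add_mulVec]
  exact cone_add hK (hM x hx) (hN x hx)

lemma knn_pow {M : Matrix (Fin n) (Fin n) ℝ} (hM : KNonneg K M) :
    ∀ m : ℕ, KNonneg K (M ^ m) := by
  intro m
  induction m with
  | zero => rw [pow_zero]; exact knn_one
  | succ m ih => rw [pow_succ]; exact knn_mul ih hM

lemma knn_sum (hK : IsProperCone K) {ι : Type*} {s : Finset ι}
    {f : ι → Matrix (Fin n) (Fin n) ℝ} (h : ∀ j ∈ s, KNonneg K (f j)) :
    KNonneg K (∑ j ∈ s, f j) := by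
  classical
  induction s using Finset.induction_on with
  | empty => simpa using knn_zero hK
  | insert _ _ hni ih =>
      rw [Finset.sum_insert hni]
      exact knn_add hK (h _ (Finset.mem_insert_self _ _))
        (ih fun j hj => h j (Finset.mem_insert_of_mem hj))

/-- Monotone (in the cone order) sequences bounded above converge. -/
lemma cone_mono_tendsto (hK : IsProperCone K)
    (x : ℕ → Fin n → ℝ) (c : Fin n → ℝ)
    (hxK : ∀ k, x k ∈ K)
    (hmono : ∀ k, x (k + 1) - x k ∈ K)
    (hbdd : ∀ k, c - x k ∈ K) :
    ∃ L, Tendsto x atTop (𝓝 L) := by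
  obtain ⟨hclosed, hconv, hsmul, hpointed, -⟩ := id hK
  have hle : ∀ k m, k ≤ m → x m - x k ∈ K := by
    intro k m hkm
    induction m, hkm using Nat.le_induction with
    | base => simpa using cone_zero_mem hK
    | succ m hkm ih =>
        have := cone_add hK (hmono m) ih
        rwa [sub_add_sub_cancel] at this
  set B : Set (Fin n → ℝ) := K ∩ ((fun v => c - v) ⁻¹' K) with hB
  have hBclosed : IsClosed B :=
    hclosed.inter (hclosed.preimage (continuous_const.sub continuous_id))
  have hxB : ∀ k, x k ∈ B := fun k => ⟨hxK k, hbdd k⟩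
  have hBbdd : Bornology.IsBounded B := by
    by_contra hub
    have hvex : ∀ j : ℕ, ∃ v, v ∈ B ∧ (j : ℝ) < ‖v‖ := by
      intro j
      by_contra hcon
      push_neg at hcon
      exact hub (isBounded_iff_forall_norm_le.2 ⟨j, hcon⟩)
    choose v hvB hv using hvex
    have hvpos : ∀ j, 0 < ‖v j‖ := fun j => lt_of_le_of_lt (Nat.cast_nonneg j) (hv j)
    have husph : ∀ j, ‖v j‖⁻¹ • v j ∈ Metric.sphere (0 : Fin n → ℝ) 1 := by
      intro j
      rw [mem_sphere_zero_iff_norm, norm_smul, norm_inv, norm_norm,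
        inv_mul_cancel₀ (ne_of_gt (hvpos j))]
    obtain ⟨uLim, huLim, φ, hφ, hφt⟩ :=
      (isCompact_sphere (0 : Fin n → ℝ) 1).tendsto_subseq husph
    have hnφ : Tendsto (fun i => ‖v (φ i)‖) atTop atTop :=
      tendsto_atTop_mono
        (fun i => le_of_lt (lt_of_le_of_lt (Nat.cast_le.2 hφ.le_apply) (hv (φ i))))
        tendsto_natCast_atTop_atTop
    have hinv : Tendsto (fun i => ‖v (φ i)‖⁻¹) atTop (𝓝 0) :=
      tendsto_inv_atTop_zero.comp hnφ
    have huK : uLim ∈ K := by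
      refine hclosed.mem_of_tendsto hφt (Eventually.of_forall fun i => ?_)
      exact hsmul _ (inv_nonneg.2 (norm_nonneg _)) _ (hvB (φ i)).1
    have hnegK : -uLim ∈ K := by
      have hten : Tendsto (fun i => ‖v (φ i)‖⁻¹ • c - ‖v (φ i)‖⁻¹ • v (φ i)) atTop
          (𝓝 ((0:ℝ) • c - uLim)) := (hinv.smul_const c).sub hφt
      rw [zero_smul, zero_sub] at hten
      refine hclosed.mem_of_tendsto hten (Eventually.of_forall fun i => ?_)
      have := hsmul _ (inv_nonneg.2 (norm_nonneg (v (φ i)))) _ (hvB (φ i)).2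
      rwa [smul_sub] at this
    have hu0 : uLim = 0 := by
      have hmem : uLim ∈ K ∩ (-K) := ⟨huK, by rwa [Set.mem_neg]⟩
      rw [hpointed] at hmem
      exact Set.mem_singleton_iff.1 hmem
    rw [mem_sphere_zero_iff_norm, hu0, norm_zero] at huLim
    exact one_ne_zero huLim.symm
  have hBcomp : IsCompact B := Metric.isCompact_iff_isClosed_bounded.2 ⟨hBclosed, hBbdd⟩
  obtain ⟨L, hLB, φ, hφ, hφt⟩ := hBcomp.tendsto_subseq hxB
  have hup : ∀ (L' : Fin n → ℝ) (ψ : ℕ → ℕ), Tendsto ψ atTop atTop →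
      Tendsto (fun i => x (ψ i)) atTop (𝓝 L') → ∀ k, L' - x k ∈ K := by
    intro L' ψ hψ hψt k
    have hcl : IsClosed {v : Fin n → ℝ | v - x k ∈ K} :=
      hclosed.preimage (continuous_id.sub continuous_const)
    refine hcl.mem_of_tendsto hψt ?_
    filter_upwards [hψ.eventually_ge_atTop k] with i hi
    exact hle k (ψ i) hi
  have heq : ∀ L' : Fin n → ℝ, (∃ ψ : ℕ → ℕ, Tendsto ψ atTop atTop ∧
      Tendsto (fun i => x (ψ i)) atTop (𝓝 L')) → L' = L := by
    rintro L' ⟨ψ, hψ, hψt⟩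
    have h1 : L' - L ∈ K := by
      have hcl : IsClosed {v : Fin n → ℝ | L' - v ∈ K} :=
        hclosed.preimage (continuous_const.sub continuous_id)
      exact hcl.mem_of_tendsto hφt
        (Eventually.of_forall fun i => hup L' ψ hψ hψt (φ i))
    have h2 : L - L' ∈ K := by
      have hcl : IsClosed {v : Fin n → ℝ | L - v ∈ K} :=
        hclosed.preimage (continuous_const.sub continuous_id)
      exact hcl.mem_of_tendsto hψt
        (Eventually.of_forall fun i => hup L φ hφ.tendsto_atTop hφt (ψ i))
    have hmem : L' - L ∈ K ∩ (-K) := ⟨h1, by rw [Set.mem_neg, neg_sub]; exact h2⟩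
    rw [hpointed] at hmem
    exact sub_eq_zero.1 (Set.mem_singleton_iff.1 hmem)
  refine ⟨L, tendsto_of_subseq_tendsto fun ns hns => ?_⟩
  obtain ⟨L', hL'B, ms, hms, hmst⟩ := hBcomp.tendsto_subseq (fun i => hxB (ns i))
  have hL'L : L' = L := heq L' ⟨fun i => ns (ms i), hns.comp hms.tendsto_atTop, hmst⟩
  exact ⟨ms, by rw [← hL'L]; exact hmst⟩

/-- Key convergence result: for a weak regular splitting of type II of a monotone
matrix `U = F - G`, the powers of `G * F⁻¹` tend to zero. -/
lemma pow_tendsto_zero (hK : IsProperCone K)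
    {U F G : Matrix (Fin n) (Fin n) ℝ}
    (hUFG : U = F - G) (hFu : IsUnit F) (hUu : IsUnit U)
    (hFi : KNonneg K F⁻¹) (hGF : KNonneg K (G * F⁻¹)) (hUi : KNonneg K U⁻¹) :
    Tendsto (fun m => (G * F⁻¹) ^ m) atTop (𝓝 0) := by
  have hFd : IsUnit F.det := (Matrix.isUnit_iff_isUnit_det F).1 hFu
  have hUd : IsUnit U.det := (Matrix.isUnit_iff_isUnit_det U).1 hUu
  have hUF : U * F⁻¹ = 1 - G * F⁻¹ := by
    rw [hUFG, Matrix.sub_mul, Matrix.mul_nonsing_inv _ hFd]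
  have hid : ∀ m : ℕ, F⁻¹ * ∑ j ∈ Finset.range m, (G * F⁻¹) ^ j
      = U⁻¹ - U⁻¹ * (G * F⁻¹) ^ m := by
    intro m
    have h2 : U * (F⁻¹ * ∑ j ∈ Finset.range m, (G * F⁻¹) ^ j) = 1 - (G * F⁻¹) ^ m := by
      rw [← Matrix.mul_assoc, hUF, one_sub_geom]
    calc F⁻¹ * ∑ j ∈ Finset.range m, (G * F⁻¹) ^ j
        = (U⁻¹ * U) * (F⁻¹ * ∑ j ∈ Finset.range m, (G * F⁻¹) ^ j) := by
          rw [Matrix.nonsing_inv_mul _ hUd, Matrix.one_mul]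
      _ = U⁻¹ * (U * (F⁻¹ * ∑ j ∈ Finset.range m, (G * F⁻¹) ^ j)) :=
          Matrix.mul_assoc _ _ _
      _ = U⁻¹ * (1 - (G * F⁻¹) ^ m) := by rw [h2]
      _ = U⁻¹ - U⁻¹ * (G * F⁻¹) ^ m := by rw [Matrix.mul_sub, Matrix.mul_one]
  have hvec : ∀ v ∈ K, Tendsto (fun m => (F⁻¹ * (G * F⁻¹) ^ m).mulVec v) atTop (𝓝 0) := by
    intro v hv
    have hxK : ∀ m, (F⁻¹ * ∑ j ∈ Finset.range m, (G * F⁻¹) ^ j).mulVec v ∈ K := by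
      intro m
      rw [Finset.mul_sum]
      exact knn_sum hK (fun j _ => knn_mul hFi (knn_pow hGF j)) v hv
    have hmono : ∀ m, (F⁻¹ * ∑ j ∈ Finset.range (m + 1), (G * F⁻¹) ^ j).mulVec v
        - (F⁻¹ * ∑ j ∈ Finset.range m, (G * F⁻¹) ^ j).mulVec v
        = (F⁻¹ * (G * F⁻¹) ^ m).mulVec v := by
      intro m
      rw [Finset.sum_range_succ, Matrix.mul_add, Matrix.add_mulVec]
      abel
    have hbdd : ∀ m, U⁻¹.mulVec v - (F⁻¹ * ∑ j ∈ Finset.range m, (G * F⁻¹) ^ j).mulVec v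
        = (U⁻¹ * (G * F⁻¹) ^ m).mulVec v := by
      intro m
      rw [hid m, Matrix.sub_mulVec]
      abel
    obtain ⟨L, hL⟩ := cone_mono_tendsto hK
      (fun m => (F⁻¹ * ∑ j ∈ Finset.range m, (G * F⁻¹) ^ j).mulVec v)
      (U⁻¹.mulVec v) hxK
      (fun m => by rw [hmono m]; exact knn_mul hFi (knn_pow hGF m) v hv)
      (fun m => by rw [hbdd m]; exact knn_mul hUi (knn_pow hGF m) v hv)
    have h1 : Tendsto (fun m => (F⁻¹ * ∑ j ∈ Finset.range (m + 1), (G * F⁻¹) ^ j).mulVec v)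
        atTop (𝓝 L) := hL.comp (tendsto_add_atTop_nat 1)
    have h2 := h1.sub hL
    rw [sub_self] at h2
    exact h2.congr fun m => hmono m
  have hall : ∀ v : Fin n → ℝ, Tendsto (fun m => (F⁻¹ * (G * F⁻¹) ^ m).mulVec v) atTop (𝓝 0) := by
    intro v
    obtain ⟨e, he⟩ := hK.2.2.2.2
    have heK : e ∈ K := interior_subset he
    obtain ⟨ε, hε, hball⟩ := Metric.mem_nhds_iff.1 (mem_interior_iff_mem_nhds.1 he)
    set t : ℝ := ε / (2 * (‖v‖ + 1)) with ht
    have htpos : 0 < t := by positivity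
    have hmem : e + t • v ∈ K := by
      apply hball
      rw [Metric.mem_ball, dist_eq_norm, add_sub_cancel_left, norm_smul,
        Real.norm_eq_abs, abs_of_pos htpos]
      rw [ht, div_mul_eq_mul_div, div_lt_iff₀ (by positivity)]
      nlinarith [norm_nonneg v]
    have h1 := hvec _ hmem
    have h2 := hvec _ heK
    have h3 := (h1.sub h2).const_smul t⁻¹
    rw [sub_self, smul_zero] at h3
    refine h3.congr fun m => ?_
    rw [Matrix.mulVec_add, Matrix.mulVec_smul, add_sub_cancel_left, smul_smul,
      inv_mul_cancel₀ (ne_of_gt htpos), one_smul]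
  have hmat : Tendsto (fun m => F⁻¹ * (G * F⁻¹) ^ m) atTop (𝓝 0) := by
    refine tendsto_pi_nhds.2 fun i => tendsto_pi_nhds.2 fun j => ?_
    have h := (tendsto_pi_nhds.1 (hall (Pi.single j 1))) i
    simp only [Matrix.mulVec_single, mul_one, Pi.zero_apply] at h
    simpa using h
  have hc : Continuous (fun M : Matrix (Fin n) (Fin n) ℝ => F * M) :=
    continuous_const.matrix_mul continuous_id
  have h4 := (hc.tendsto 0).comp hmat
  rw [mul_zero] at h4
  refine h4.congr fun m => ?_
  show F * (F⁻¹ * (G * F⁻¹) ^ m) = (G * F⁻¹) ^ m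
  rw [← Matrix.mul_assoc, Matrix.mul_nonsing_inv _ hFd, Matrix.one_mul]

end ConeLemmas

theorem stmt_9 {n : ℕ} (K : Set (Fin n → ℝ)) (hK : IsProperCone K)
    (A U V F G : Matrix (Fin n) (Fin n) ℝ)
    (hmono : KMonotone K A)
    (houter : KRegularSplitting K A U V)
    (hinner : KWeakRegularSplittingII K U F G)
    (hcomm : V * F⁻¹ * G = G * F⁻¹ * V) (s : ℕ) (hs : 1 ≤ s) :
    IsUnit (1 - twoStageT F G V s) ∧ IsUnit (1 - twoStageThat F G V s) ∧
    (1 - twoStageThat F G V s)⁻¹ * A = A * (1 - twoStageT F G V s)⁻¹ ∧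
    ((1 - twoStageThat F G V s)⁻¹ * A)⁻¹ = F⁻¹ * ∑ j ∈ Finset.range s, (G * F⁻¹) ^ j ∧
    KNonneg K (((1 - twoStageThat F G V s)⁻¹ * A)⁻¹) ∧
    ((1 - twoStageThat F G V s)⁻¹ * A - A) * ((1 - twoStageThat F G V s)⁻¹ * A)⁻¹ =
      twoStageThat F G V s ∧
    KNonneg K (twoStageThat F G V s) ∧
    KWeakRegularSplittingII K A ((1 - twoStageThat F G V s)⁻¹ * A)
      ((1 - twoStageThat F G V s)⁻¹ * A - A) ∧
    (∀ X₁ Y₁ : Matrix (Fin n) (Fin n) ℝ, A = X₁ - Y₁ → IsUnit X₁ →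
      Y₁ * X₁⁻¹ = twoStageThat F G V s → X₁ = (1 - twoStageThat F G V s)⁻¹ * A) := by
  obtain ⟨hAu, hAi⟩ := hmono
  obtain ⟨hAUV, hUu, hUi, hV⟩ := houter
  obtain ⟨hUFG, hFu, hFi, hGF⟩ := hinner
  have hAd : IsUnit A.det := (Matrix.isUnit_iff_isUnit_det A).1 hAu
  have hUd : IsUnit U.det := (Matrix.isUnit_iff_isUnit_det U).1 hUu
  have hFd : IsUnit F.det := (Matrix.isUnit_iff_isUnit_det F).1 hFu
  -- convergence of the powers of `G * F⁻¹`
  have hten : Tendsto (fun m => (G * F⁻¹) ^ m) atTop (𝓝 0) :=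
    pow_tendsto_zero hK hUFG hFu hUu hFi hGF hUi
  have hdet : Tendsto (fun m => (1 - (G * F⁻¹) ^ m).det) atTop (𝓝 1) := by
    have hc : Continuous (fun M : Matrix (Fin n) (Fin n) ℝ => (1 - M).det) :=
      Continuous.matrix_det (continuous_const.sub continuous_id)
    have h2 := (hc.tendsto 0).comp hten
    simpa [Function.comp_def] using h2
  obtain ⟨m0, hm0⟩ := eventually_atTop.1 (hdet.eventually_ne one_ne_zero)
  have hkey : (1 - (G * F⁻¹) ^ (s * (m0 + 1))).det ≠ 0 :=
    hm0 _ (le_trans (Nat.le_succ m0) (Nat.le_mul_of_pos_left _ (by omega)))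
  have hdet_s : (1 - (G * F⁻¹) ^ s).det ≠ 0 := by
    intro h0
    apply hkey
    have hfac : (1 - (G * F⁻¹) ^ s) * (∑ j ∈ Finset.range (m0 + 1), ((G * F⁻¹) ^ s) ^ j)
        = 1 - (G * F⁻¹) ^ (s * (m0 + 1)) := by
      rw [pow_mul]; exact one_sub_geom _ _
    rw [← hfac, Matrix.det_mul, h0, zero_mul]
  have hSdet : IsUnit (∑ j ∈ Finset.range s, (G * F⁻¹) ^ j).det := by
    rw [isUnit_iff_ne_zero]
    intro h0
    apply hdet_s
    rw [← geom_one_sub (G * F⁻¹) s, Matrix.det_mul, h0, zero_mul]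
  have hSu : IsUnit (∑ j ∈ Finset.range s, (G * F⁻¹) ^ j) :=
    (Matrix.isUnit_iff_isUnit_det _).2 hSdet
  have hQu : IsUnit (F⁻¹ * ∑ j ∈ Finset.range s, (G * F⁻¹) ^ j) :=
    (Matrix.isUnit_nonsing_inv_iff.2 hFu).mul hSu
  have hQd : IsUnit (F⁻¹ * ∑ j ∈ Finset.range s, (G * F⁻¹) ^ j).det :=
    (Matrix.isUnit_iff_isUnit_det _).1 hQu
  -- basic identities
  have hFinvU : F⁻¹ * U = 1 - F⁻¹ * G := by
    rw [hUFG, Matrix.mul_sub, Matrix.nonsing_inv_mul _ hFd]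
  have hUFinv : U * F⁻¹ = 1 - G * F⁻¹ := by
    rw [hUFG, Matrix.sub_mul, Matrix.mul_nonsing_inv _ hFd]
  have hPN : F⁻¹ * G * F⁻¹ = F⁻¹ * (G * F⁻¹) := Matrix.mul_assoc _ _ _
  have hPF : ∀ j : ℕ, (F⁻¹ * G) ^ j * F⁻¹ = F⁻¹ * (G * F⁻¹) ^ j := by
    intro j
    induction j with
    | zero => rw [pow_zero, pow_zero, Matrix.one_mul, Matrix.mul_one]
    | succ j ih =>
        rw [pow_succ, pow_succ, Matrix.mul_assoc, hPN, ← Matrix.mul_assoc, ih,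
          Matrix.mul_assoc]
  have hQQ : (∑ j ∈ Finset.range s, (F⁻¹ * G) ^ j) * F⁻¹
      = F⁻¹ * ∑ j ∈ Finset.range s, (G * F⁻¹) ^ j := by
    rw [Finset.sum_mul, Finset.mul_sum]
    exact Finset.sum_congr rfl fun j _ => hPF j
  have hVFN : V * F⁻¹ * (G * F⁻¹) = G * F⁻¹ * (V * F⁻¹) := by
    rw [← Matrix.mul_assoc, hcomm, Matrix.mul_assoc]
  have hcN : Commute (V * F⁻¹) (G * F⁻¹) := hVFN
  have hVS : V * (F⁻¹ * ∑ j ∈ Finset.range s, (G * F⁻¹) ^ j)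
      = (∑ j ∈ Finset.range s, (G * F⁻¹) ^ j) * (V * F⁻¹) := by
    rw [← Matrix.mul_assoc]
    exact (Commute.sum_right _ _ _ fun j _ => hcN.pow_right j).eq
  -- the two main factorizations
  have hI1 : ((∑ j ∈ Finset.range s, (F⁻¹ * G) ^ j) * F⁻¹) * A
      = 1 - twoStageT F G V s := by
    simp only [twoStageT]
    rw [hAUV, Matrix.mul_sub, Matrix.mul_assoc, hFinvU, geom_one_sub,
      Matrix.mul_assoc, sub_sub]
  have hI2 : A * (F⁻¹ * ∑ j ∈ Finset.range s, (G * F⁻¹) ^ j)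
      = 1 - twoStageThat F G V s := by
    simp only [twoStageThat]
    rw [hAUV, Matrix.sub_mul, ← Matrix.mul_assoc U, hUFinv, one_sub_geom, hVS, sub_sub]
  have hQu' : IsUnit ((∑ j ∈ Finset.range s, (F⁻¹ * G) ^ j) * F⁻¹) := by
    rw [hQQ]; exact hQu
  -- the matrix X
  have hX : (1 - twoStageThat F G V s)⁻¹ * A
      = (F⁻¹ * ∑ j ∈ Finset.range s, (G * F⁻¹) ^ j)⁻¹ := by
    rw [← hI2, Matrix.mul_inv_rev, Matrix.mul_assoc, Matrix.nonsing_inv_mul _ hAd,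
      Matrix.mul_one]
  have hX4 : ((1 - twoStageThat F G V s)⁻¹ * A)⁻¹
      = F⁻¹ * ∑ j ∈ Finset.range s, (G * F⁻¹) ^ j := by
    rw [hX, Matrix.nonsing_inv_nonsing_inv _ hQd]
  have hKQ : KNonneg K (F⁻¹ * ∑ j ∈ Finset.range s, (G * F⁻¹) ^ j) := by
    rw [Finset.mul_sum]
    exact knn_sum hK fun j _ => knn_mul hFi (knn_pow hGF j)
  have hKT : KNonneg K (twoStageThat F G V s) := by
    simp only [twoStageThat]
    rw [Finset.sum_mul]
    exact knn_add hK (knn_pow hGF s)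
      (knn_sum hK fun j _ => knn_mul (knn_pow hGF j) (knn_mul hV hFi))
  have hX6 : ((1 - twoStageThat F G V s)⁻¹ * A - A) * ((1 - twoStageThat F G V s)⁻¹ * A)⁻¹
      = twoStageThat F G V s := by
    rw [hX4, hX, Matrix.sub_mul, Matrix.nonsing_inv_mul _ hQd, hI2, sub_sub_cancel]
  refine ⟨?_, ?_, ?_, hX4, ?_, hX6, hKT, ?_, ?_⟩
  · rw [← hI1]
    exact hQu'.mul hAu
  · rw [← hI2]
    exact hAu.mul hQu
  · rw [hX, ← hI1,
      Matrix.mul_inv_rev ((∑ j ∈ Finset.range s, (F⁻¹ * G) ^ j) * F⁻¹) A,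
      ← Matrix.mul_assoc, Matrix.mul_nonsing_inv _ hAd, Matrix.one_mul, hQQ]
  · rw [hX4]
    exact hKQ
  · refine ⟨(sub_sub_cancel _ _).symm, ?_, ?_, ?_⟩
    · rw [hX]
      exact Matrix.isUnit_nonsing_inv_iff.2 hQu
    · rw [hX4]
      exact hKQ
    · rw [hX6]
      exact hKT
  · intro X₁ Y₁ h1 h2 h3
    have hX1d : IsUnit X₁.det := (Matrix.isUnit_iff_isUnit_det X₁).1 h2
    have hAX1 : A * X₁⁻¹ = 1 - twoStageThat F G V s := by
      rw [h1, Matrix.sub_mul, Matrix.mul_nonsing_inv _ hX1d, h3]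
    rw [← hAX1, Matrix.mul_inv_rev, Matrix.nonsing_inv_nonsing_inv _ hX1d,
      Matrix.mul_assoc, Matrix.nonsing_inv_mul _ hAd, Matrix.mul_one]
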